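/- Let ρ be a probability density on ℝⁿ invariant under a group G acting via a representation into GL(n, ℝ), and let v be a time-dependent, globally Lipschitz vector field that is equivariant under a subgroup H ≤ G. Then for every T ≥ 0, the push-forward of ρ along the time-T flow map F_{v,T} is H-invariant. -/

import Mathlib

open MeasureTheory

/-- The pushforward of a `G`-invariant density along the time-`T` flow map of an
`H`-equivariant, globally Lipschitz time-dependent vector field is `H`-invariant. -/
theorem pushforward_flow_invariant {n : ℕ} {G : Type*} [Group G]
    (R : G →* Matrix.GeneralLinearGroup (Fin n) ℝ)
    (H : Subgroup G)
    (ρ : (Fin n → ℝ) → ℝ)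
    (hmeas : Measurable ρ) (hnonneg : ∀ x, 0 ≤ ρ x)
    (hint : ∫ x, ρ x = 1)
    (hρinv : ∀ (g : G) (x : Fin n → ℝ), ρ ((R g : Matrix (Fin n) (Fin n) ℝ).mulVec x) = ρ x)
    (v : (Fin n → ℝ) → ℝ → (Fin n → ℝ))
    (K : NNReal)
    (hlip : ∀ t : ℝ, LipschitzWith K (fun x => v x t))
    (hcont : Continuous fun p : (Fin n → ℝ) × ℝ => v p.1 p.2)
    (hequiv : ∀ h ∈ H, ∀ (x : Fin n → ℝ) (t : ℝ),
      v ((R h : Matrix (Fin n) (Fin n) ℝ).mulVec x) t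
        = (R h : Matrix (Fin n) (Fin n) ℝ).mulVec (v x t))
    (T : ℝ) (hT : 0 ≤ T)
    -- `F` is the time-`T` flow map of `v`, with inverse `Finv`:
    (F Finv : (Fin n → ℝ) → (Fin n → ℝ))
    (traj : (Fin n → ℝ) → ℝ → (Fin n → ℝ))
    (htraj0 : ∀ z, traj z 0 = z)
    (htraj : ∀ z, ∀ t : ℝ, 0 ≤ t → HasDerivAt (traj z) (v (traj z t) t) t)
    (hF : ∀ z, F z = traj z T)
    (hFdiff : ContDiff ℝ 1 F) (hFinvdiff : ContDiff ℝ 1 Finv)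
    (hleft : Function.LeftInverse Finv F) (hright : Function.RightInverse Finv F) :
    ∀ h ∈ H, ∀ x : Fin n → ℝ,
      ρ (Finv ((R h : Matrix (Fin n) (Fin n) ℝ).mulVec x))
          * |(fderiv ℝ Finv ((R h : Matrix (Fin n) (Fin n) ℝ).mulVec x)).det|
        = ρ (Finv x) * |(fderiv ℝ Finv x).det| := by
  intro h hh x
  set M : Matrix (Fin n) (Fin n) ℝ := (R h : Matrix (Fin n) (Fin n) ℝ) with hM
  set L : (Fin n → ℝ) →L[ℝ] (Fin n → ℝ) :=
    LinearMap.toContinuousLinearMap (Matrix.mulVecLin M) with hL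
  have hLapp : ∀ y, L y = M.mulVec y := fun y => rfl
  -- Step 1: F commutes with multiplication by M.
  have hFcomm : ∀ z, F (M.mulVec z) = M.mulVec (F z) := by
    intro z
    have key : Set.EqOn (fun t => traj (M.mulVec z) t)
        (fun t => M.mulVec (traj z t)) (Set.Icc 0 T) := by
      apply ODE_solution_unique (v := fun t x => v x t) (K := K) hlip
      · intro t ht
        exact ((htraj (M.mulVec z) t ht.1).continuousAt.continuousWithinAt)
      · intro t ht
        exact ((htraj (M.mulVec z) t ht.1).hasDerivWithinAt)
      · intro t ht
        have : HasDerivAt (fun t => L (traj z t)) (L (v (traj z t) t)) t :=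
          (L.hasFDerivAt.comp_hasDerivAt t (htraj z t ht.1))
        exact this.continuousAt.continuousWithinAt
      · intro t ht
        have hd : HasDerivAt (fun t => L (traj z t)) (L (v (traj z t) t)) t :=
          (L.hasFDerivAt.comp_hasDerivAt t (htraj z t ht.1))
        simp only [hLapp] at hd
        have := hequiv h hh (traj z t) t
        rw [← this] at hd
        exact hd.hasDerivWithinAt
      · simp [htraj0]
    have := key (Set.right_mem_Icc.2 hT)
    simpa [hF] using this
  -- Step 2: Finv commutes with multiplication by M.
  have hFinvcomm : ∀ y, Finv (M.mulVec y) = M.mulVec (Finv y) := by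
    intro y
    have : M.mulVec y = F (M.mulVec (Finv y)) := by
      rw [hFcomm, hright]
    rw [this, hleft]
  -- M has nonzero determinant.
  have hMunit : IsUnit M := ⟨R h, rfl⟩
  have hdetM : M.det ≠ 0 := by
    have := (Matrix.isUnit_iff_isUnit_det M).1 hMunit
    exact this.ne_zero
  have hLdet : L.det = M.det := by
    rw [ContinuousLinearMap.det]
    have : (L : (Fin n → ℝ) →ₗ[ℝ] (Fin n → ℝ)) = Matrix.mulVecLin M :=
      LinearMap.coe_toContinuousLinearMap _
    rw [this, ← Matrix.toLin'_apply'] at *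
    exact LinearMap.det_toLin' M
  -- Differentiability.
  have hFinvDiff : Differentiable ℝ Finv := hFinvdiff.differentiable one_ne_zero
  -- derivative identity via chain rule on Finv ∘ L = L ∘ Finv
  have hcompfun : Finv ∘ (fun y => L y) = (fun y => L (Finv y)) := by
    funext y
    simp [hLapp, hFinvcomm]
  have h1 : fderiv ℝ (Finv ∘ (fun y => L y)) x = (fderiv ℝ Finv (L x)).comp L := by
    rw [fderiv_comp x (hFinvDiff (L x)) (L.differentiableAt)]
    congr 1
    exact L.fderiv
  have h2 : fderiv ℝ (fun y => L (Finv y)) x = L.comp (fderiv ℝ Finv x) := by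
    have := fderiv_comp (𝕜 := ℝ) x (L.differentiableAt (x := Finv x)) (hFinvDiff x)
    rw [show (fun y => L (Finv y)) = (fun y => L y) ∘ Finv from rfl, this, L.fderiv]
  have hdeq : (fderiv ℝ Finv (L x)).comp L = L.comp (fderiv ℝ Finv x) := by
    rw [← h1, ← h2, hcompfun]
  have hdet : (fderiv ℝ Finv (M.mulVec x)).det = (fderiv ℝ Finv x).det := by
    have := congrArg ContinuousLinearMap.det hdeq
    simp only [ContinuousLinearMap.det, ContinuousLinearMap.toLinearMap_comp] at this
    rw [LinearMap.det_comp, LinearMap.det_comp] at this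
    have hLd : LinearMap.det (L : (Fin n → ℝ) →ₗ[ℝ] (Fin n → ℝ)) = M.det := hLdet
    rw [hLd] at this
    have hx : (fderiv ℝ Finv (M.mulVec x)).det = LinearMap.det
        ((fderiv ℝ Finv (L x) : (Fin n → ℝ) →ₗ[ℝ] (Fin n → ℝ))) := rfl
    rw [hx]
    have hx2 : (fderiv ℝ Finv x).det = LinearMap.det
        ((fderiv ℝ Finv x : (Fin n → ℝ) →ₗ[ℝ] (Fin n → ℝ))) := rfl
    rw [hx2]
    exact mul_right_cancel₀ hdetM (by rw [this]; ring)
  rw [hFinvcomm x, hρinv h (Finv x), hdet]
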